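/- Let Riem : Fin 4 → Fin 4 → Fin 4 → Fin 4 → ℝ (the components R^k_{iξλ}, with first two arguments Lorentz indices and last two space-time indices), let e : Matrix (Fin 4) (Fin 4) ℝ be invertible (the vierbein components e_i^μ, first argument the Lorentz index), and let ηM : Matrix (Fin 4) (Fin 4) ℝ = Matrix.diagonal ![1, −1, −1, −1] be the Minkowski metric. With ε = (det e)⁻¹ (the determinant of the dual vierbein), define the vierbein Einstein-Hilbert-Cartan density R̃(Riem, e) = ∑_{k,i,j,ξ,λ} Riem k i ξ λ · e k ξ · e j λ · ηM i j · ε. Then for all μ, ν ∈ Fin 4: −∑_{m} (∂R̃/∂e_{(m,ν)}) · e m μ + ∑_{n,m,λ} (∂R̃/∂Riem_{(n,m,μ,λ)}) · Riem n m ν λ + ∑_{n,m,β} (∂R̃/∂Riem_{(n,m,β,μ)}) · Riem n m β ν = (if μ = ν then R̃(Riem, e) else 0), where the partial derivatives are Fréchet partial derivatives at (Riem, e). -/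

import Mathlib

set_option maxHeartbeats 2000000
set_option maxRecDepth 100000

attribute [local instance] Matrix.normedAddCommGroup Matrix.normedSpace

abbrev F4 := Fin 4 → Fin 4 → Fin 4 → Fin 4 → ℝ
abbrev M4 := Matrix (Fin 4) (Fin 4) ℝ
abbrev P4 := F4 × M4

noncomputable def detCM : ContinuousMultilinearMap ℝ (fun _ : Fin 4 => (Fin 4 → ℝ)) ℝ :=
  { Matrix.detRowAlternating.toMultilinearMap with
    cont := by
      have : Continuous fun M : Matrix (Fin 4) (Fin 4) ℝ => M.det :=
        Continuous.matrix_det continuous_id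
      exact this }

lemma linearDeriv_std (e : Matrix (Fin 4) (Fin 4) ℝ) (m ν : Fin 4) :
    (detCM.linearDeriv e) (Matrix.single m ν 1) = e.adjugate ν m := by
  erw [ContinuousMultilinearMap.linearDeriv_apply]
  rw [Finset.sum_eq_single m]
  · have hrow : Matrix.single m ν (1:ℝ) m = Pi.single ν (1:ℝ) := by
      funext b
      simp [Matrix.single, Pi.single_apply, eq_comm]
    rw [Matrix.adjugate_apply]
    exact congrArg detCM (congrArg (Function.update e m) hrow)
  · intro i _ him
    have hrow : Matrix.single m ν (1:ℝ) i = 0 := by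
      funext b
      simp [Matrix.single, him.symm]
    exact (congrArg detCM (congrArg (Function.update e i) hrow)).trans
      (detCM.map_update_zero _ _)
  · simp

noncomputable def π₁ (k i ξ l : Fin 4) : P4 →L[ℝ] ℝ :=
  (ContinuousLinearMap.proj l).comp <| (ContinuousLinearMap.proj ξ).comp <|
    (ContinuousLinearMap.proj i).comp <| (ContinuousLinearMap.proj k).comp <|
      ContinuousLinearMap.fst ℝ F4 M4

noncomputable def π₂ (a b : Fin 4) : P4 →L[ℝ] ℝ :=
  (ContinuousLinearMap.proj b).comp <| (ContinuousLinearMap.proj a).comp <|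
    ContinuousLinearMap.snd ℝ F4 M4

@[simp] lemma π₁_apply (k i ξ l : Fin 4) (x : P4) : π₁ k i ξ l x = x.1 k i ξ l := rfl
lemma LD_std (e : M4) (m ν : Fin 4) :
    (show M4 →L[ℝ] ℝ from detCM.linearDeriv e) (Matrix.single m ν 1)
      = e.adjugate ν m := linearDeriv_std e m ν

lemma LD_zero (e : M4) : (show M4 →L[ℝ] ℝ from detCM.linearDeriv e) (0 : M4) = 0 :=
  map_zero _

lemma LD_snd (e : M4) (a : F4) (b : M4) :
    ((show M4 →L[ℝ] ℝ from detCM.linearDeriv e).comp (ContinuousLinearMap.snd ℝ F4 M4)) (a, b)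
      = (show M4 →L[ℝ] ℝ from detCM.linearDeriv e) b := rfl

@[simp] lemma snd_pair (a : F4) (b : M4) : (ContinuousLinearMap.snd ℝ F4 M4) (a, b) = b := rfl
@[simp] lemma π₂_apply (a b : Fin 4) (x : P4) : π₂ a b x = x.2 a b := rfl

/-- Eq. (22), the tensor identity for the metric (holonomic) index class
of the vierbein Einstein-Hilbert-Cartan density, with the Lorentz (nonholonomic)
indices fully contracted against the Minkowski metric. -/
theorem vierbein_ehc_holonomic_identity
    (Riem : Fin 4 → Fin 4 → Fin 4 → Fin 4 → ℝ)
    (e : Matrix (Fin 4) (Fin 4) ℝ) (he : IsUnit e.det)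
    (ηM : Matrix (Fin 4) (Fin 4) ℝ) (hη : ηM = Matrix.diagonal ![1, -1, -1, -1])
    (Rt : (Fin 4 → Fin 4 → Fin 4 → Fin 4 → ℝ) × Matrix (Fin 4) (Fin 4) ℝ → ℝ)
    (hRt : Rt = fun x =>
      ∑ k, ∑ i, ∑ j, ∑ ξ, ∑ l,
        x.1 k i ξ l * x.2 k ξ * x.2 j l * ηM i j * (x.2.det)⁻¹) :
    ∀ μ ν : Fin 4,
      -(∑ m, fderiv ℝ Rt (Riem, e) (0, Matrix.single m ν 1) * e m μ)
      + (∑ n, ∑ m, ∑ l, fderiv ℝ Rt (Riem, e)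
          ((fun a b c d => if a = n ∧ b = m ∧ c = μ ∧ d = l then 1 else 0), 0)
          * Riem n m ν l)
      + (∑ n, ∑ m, ∑ β, fderiv ℝ Rt (Riem, e)
          ((fun a b c d => if a = n ∧ b = m ∧ c = β ∧ d = μ then 1 else 0), 0)
          * Riem n m β ν)
      = if μ = ν then Rt (Riem, e) else 0 := by
  intro μ ν
  have hd : e.det ≠ 0 := he.ne_zero
  have hRt' : Rt = fun x : P4 =>
      (∑ k, ∑ i, ∑ j, ∑ ξ, ∑ l,
        x.1 k i ξ l * x.2 k ξ * x.2 j l * ηM i j) * (x.2.det)⁻¹ := by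
    rw [hRt]; funext x; simp only [Finset.sum_mul]
  have hdet : HasFDerivAt (fun x : P4 => x.2.det)
      ((show M4 →L[ℝ] ℝ from detCM.linearDeriv e).comp (ContinuousLinearMap.snd ℝ F4 M4)) (Riem, e) :=
    ((detCM.hasFDerivAt e).comp (Riem, e)
      ((ContinuousLinearMap.snd ℝ F4 M4).hasFDerivAt (x := (Riem, e))) : _)
  have hinv : HasFDerivAt (fun x : P4 => (x.2.det)⁻¹)
      ((ContinuousLinearMap.smulRight (1 : ℝ →L[ℝ] ℝ) (-(e.det ^ 2)⁻¹)).comp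
        ((show M4 →L[ℝ] ℝ from detCM.linearDeriv e).comp (ContinuousLinearMap.snd ℝ F4 M4))) (Riem, e) :=
    (hasFDerivAt_inv hd).comp (Riem, e) hdet
  have hS : HasFDerivAt
      (fun x : P4 =>
        ∑ k, ∑ i, ∑ j, ∑ ξ, ∑ l,
        x.1 k i ξ l * x.2 k ξ * x.2 j l * ηM i j)
      (∑ k, ∑ i, ∑ j, ∑ ξ, ∑ l,
        ηM i j • ((Riem k i ξ l * e k ξ) • π₂ j l +
          e j l • (Riem k i ξ l • π₂ k ξ + e k ξ • π₁ k i ξ l))) (Riem, e) :=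
    HasFDerivAt.fun_sum fun k _ => HasFDerivAt.fun_sum fun i _ => HasFDerivAt.fun_sum fun j _ =>
      HasFDerivAt.fun_sum fun ξ _ => HasFDerivAt.fun_sum fun l _ =>
        ((((π₁ k i ξ l).hasFDerivAt (x := (Riem, e))).mul
            ((π₂ k ξ).hasFDerivAt (x := (Riem, e)))).mul
          ((π₂ j l).hasFDerivAt (x := (Riem, e)))).mul_const (ηM i j)
  have hD : HasFDerivAt Rt
      ((∑ k, ∑ i, ∑ j, ∑ ξ, ∑ l,
          Riem k i ξ l * e k ξ * e j l * ηM i j) •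
        ((ContinuousLinearMap.smulRight (1 : ℝ →L[ℝ] ℝ) (-(e.det ^ 2)⁻¹)).comp
          ((show M4 →L[ℝ] ℝ from detCM.linearDeriv e).comp (ContinuousLinearMap.snd ℝ F4 M4)))
       + (e.det)⁻¹ •
        (∑ k, ∑ i, ∑ j, ∑ ξ, ∑ l,
          ηM i j • ((Riem k i ξ l * e k ξ) • π₂ j l +
            e j l • (Riem k i ξ l • π₂ k ξ + e k ξ • π₁ k i ξ l)))) (Riem, e) := by
    rw [hRt']
    exact hS.mul hinv
  have hfd := hD.fderiv
  rw [hfd, hRt']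
  simp only [ContinuousLinearMap.add_apply, ContinuousLinearMap.coe_smul', Pi.smul_apply,
    ContinuousLinearMap.coe_comp', Function.comp_apply, ContinuousLinearMap.smulRight_apply,
    ContinuousLinearMap.one_apply, ContinuousLinearMap.coe_sum', Finset.sum_apply,
    π₁_apply, π₂_apply, smul_eq_mul, snd_pair, LD_snd, LD_std, LD_zero, map_zero,
    Pi.zero_apply, Matrix.zero_apply, mul_zero, zero_mul, add_zero, zero_add]
  simp only [Matrix.single, Matrix.of_apply, mul_ite, ite_mul, mul_zero, zero_mul,
    mul_one, one_mul, ite_and, Finset.sum_ite_irrel, Finset.sum_const_zero,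
    Finset.sum_ite_eq, Finset.sum_ite_eq', Finset.mem_univ, if_true, add_zero, zero_add]
  simp only [mul_add, mul_ite, mul_zero, Finset.sum_add_distrib, Finset.sum_ite_irrel,
    Finset.sum_const_zero, Finset.sum_ite_eq, Finset.sum_ite_eq', Finset.mem_univ, if_true]
  simp only [add_mul, Finset.sum_add_distrib]
  have hAdj : (∑ x, e.adjugate ν x * e x μ) = e.det * (if μ = ν then 1 else 0) := by
    have h := congrFun (congrFun (Matrix.adjugate_mul e) ν) μ
    simp only [Matrix.mul_apply, Matrix.smul_apply, Matrix.one_apply, smul_eq_mul] at h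
    rw [h]
    by_cases hc : ν = μ
    · subst hc; simp
    · rw [if_neg hc, if_neg (fun hh : μ = ν => hc hh.symm), mul_zero]
  have he3 : (∑ x : Fin 4,
        (∑ k : Fin 4, ∑ i : Fin 4, ∑ j : Fin 4, ∑ ξ : Fin 4, ∑ l : Fin 4,
          Riem k i ξ l * e k ξ * e j l * ηM i j) *
            (e.adjugate ν x * -(e.det ^ 2)⁻¹) * e x μ)
      = -(if μ = ν then
          (∑ k : Fin 4, ∑ i : Fin 4, ∑ j : Fin 4, ∑ ξ : Fin 4, ∑ l : Fin 4,
            Riem k i ξ l * e k ξ * e j l * ηM i j) * e.det⁻¹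
        else 0) := by
    rw [show (∑ x : Fin 4,
        (∑ k : Fin 4, ∑ i : Fin 4, ∑ j : Fin 4, ∑ ξ : Fin 4, ∑ l : Fin 4,
          Riem k i ξ l * e k ξ * e j l * ηM i j) *
            (e.adjugate ν x * -(e.det ^ 2)⁻¹) * e x μ)
      = (-((∑ k : Fin 4, ∑ i : Fin 4, ∑ j : Fin 4, ∑ ξ : Fin 4, ∑ l : Fin 4,
          Riem k i ξ l * e k ξ * e j l * ηM i j) * (e.det ^ 2)⁻¹)) *
          ∑ x, e.adjugate ν x * e x μ from by
      rw [Finset.mul_sum]; exact Finset.sum_congr rfl fun x _ => by ring]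
    rw [hAdj]
    split_ifs
    · rw [sq, mul_inv]; field_simp
    · ring
  have he1 : (∑ x : Fin 4,
        (e.det⁻¹ * ∑ x_1 : Fin 4, ∑ x_2 : Fin 4, ∑ x_3 : Fin 4,
          ηM x_2 x * (Riem x_1 x_2 x_3 ν * e x_1 x_3)) * e x μ)
      = ∑ x : Fin 4, ∑ x_1 : Fin 4, ∑ x_2 : Fin 4,
          (e.det⁻¹ * ∑ x_3 : Fin 4, ηM x_1 x_3 * (e x_3 μ * e x x_2)) * Riem x x_1 x_2 ν := by
    simp only [Finset.mul_sum, Finset.sum_mul, Fin.sum_univ_four]; ring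
  have he2 : (∑ x : Fin 4,
        (e.det⁻¹ * ∑ x_1 : Fin 4, ∑ x_2 : Fin 4, ∑ x_3 : Fin 4,
          ηM x_1 x_2 * (e x_2 x_3 * Riem x x_1 ν x_3)) * e x μ)
      = ∑ x : Fin 4, ∑ x_1 : Fin 4, ∑ x_2 : Fin 4,
          (e.det⁻¹ * ∑ x_3 : Fin 4, ηM x_1 x_3 * (e x_3 x_2 * e x μ)) * Riem x x_1 ν x_2 := by
    simp only [Finset.mul_sum, Finset.sum_mul, Fin.sum_univ_four]; ring
  linarith [he1, he2, he3]
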